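/- Let a, w, b be elements of the free monoid on an alphabet α with w ≠ 1, and let A ⊆ ℕ be eventually periodic, i.e., there exist N ∈ ℕ and m ≥ 1 such that for all k ≥ N, k ∈ A if and only if k + m ∈ A. Then the set T = {a * w^k * b : k ∈ A} is a finite disjoint union of sandwiches; moreover these sandwiches can be taken of the form (a * w^t)⟨w^m⟩b together with singletons. -/
import Mathlib


/-- The sandwich `a⟨w⟩b = {a * w^n * b : n ∈ ℕ}` in a monoid. -/
def sandwich {S : Type*} [Monoid S] (a w b : S) : Set S :=
  Set.range fun n : ℕ => a * w ^ n * b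

theorem eventually_periodic_set_of_powers_decomposes
    {α : Type*} (a w b : FreeMonoid α) (hw : w ≠ 1)
    (A : Set ℕ) (N : ℕ) (m : ℕ) (hm : 1 ≤ m)
    (hper : ∀ k ≥ N, (k ∈ A ↔ k + m ∈ A)) :
    ∃ (s : ℕ) (p q r : Fin s → FreeMonoid α),
      (∀ i j, i ≠ j →
        Disjoint (sandwich (p i) (q i) (r i)) (sandwich (p j) (q j) (r j))) ∧
      ({z : FreeMonoid α | ∃ k ∈ A, z = a * w ^ k * b} =
        ⋃ i, sandwich (p i) (q i) (r i)) ∧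
      (∀ i, (∃ t : ℕ, p i = a * w ^ t ∧ q i = w ^ m ∧ r i = b) ∨
        ∃ z : FreeMonoid α, sandwich (p i) (q i) (r i) = {z}) := by
  classical
  set f : ℕ → FreeMonoid α := fun k => a * w ^ k * b with hfdef
  have hwlen : 0 < w.length := by
    rcases Nat.eq_zero_or_pos w.length with h | h
    · exact absurd (FreeMonoid.length_eq_zero.mp h) hw
    · exact h
  have hpowlen : ∀ n : ℕ, (w ^ n).length = n * w.length := by
    intro n
    induction n with
    | zero => simp
    | succ n ih => rw [pow_succ, FreeMonoid.length_mul, ih]; ring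
  have hfinj : Function.Injective f := by
    intro x y hxy
    have hl : (f x).length = (f y).length := by rw [hxy]
    simp only [hfdef, FreeMonoid.length_mul, hpowlen] at hl
    have hx : x * w.length = y * w.length := by omega
    exact Nat.eq_of_mul_eq_mul_right hwlen hx
  have key : ∀ k, N ≤ k → ∀ j, (k + j * m ∈ A ↔ k ∈ A) := by
    intro k hk j
    induction j with
    | zero => simp
    | succ j ih =>
      have h1 := hper (k + j * m) (le_trans hk (Nat.le_add_right _ _))
      have h2 : k + (j + 1) * m = (k + j * m) + m := by ring
      rw [h2, ← h1, ih]
  set F : Finset ℕ := (Finset.range (N + m)).filter (· ∈ A) with hF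
  have hFmem : ∀ k, k ∈ F ↔ k < N + m ∧ k ∈ A := by
    intro k; simp [hF]
  set E : ℕ → Set ℕ := fun k => if k < N then {k} else {n | ∃ j, n = k + j * m} with hE
  have hcomb : ∀ k j : ℕ, a * w ^ (k + j * m) * b = a * w ^ k * (w ^ m) ^ j * b := by
    intro k j
    rw [pow_add, mul_comm j m, pow_mul]
    simp [mul_assoc]
  have hsand : ∀ k : ℕ,
      sandwich (a * w ^ k) (if k < N then 1 else w ^ m) b = f '' E k := by
    intro k
    by_cases hk : k < N
    · simp only [hE, if_pos hk]
      ext z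
      simp only [sandwich, Set.mem_range, Set.image_singleton, Set.mem_singleton_iff, hfdef]
      constructor
      · rintro ⟨n, rfl⟩; simp
      · rintro rfl; exact ⟨0, by simp⟩
    · simp only [hE, if_neg hk]
      ext z
      simp only [sandwich, Set.mem_range, Set.mem_image, Set.mem_setOf_eq, hfdef]
      constructor
      · rintro ⟨n, rfl⟩
        exact ⟨k + n * m, ⟨n, rfl⟩, hcomb k n⟩
      · rintro ⟨x, ⟨j, rfl⟩, rfl⟩
        exact ⟨j, (hcomb k j).symm⟩
  have hEdisj : ∀ k k', k ∈ F → k' ∈ F → k ≠ k' → Disjoint (E k) (E k') := by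
    intro k k' hkF hk'F hne
    rw [hFmem] at hkF hk'F
    rw [Set.disjoint_left]
    intro n hn hn'
    by_cases h1 : k < N <;> by_cases h2 : k' < N <;>
      simp only [hE, if_pos, if_neg, h1, h2, Set.mem_singleton_iff, Set.mem_setOf_eq] at hn hn'
    · exact hne (hn ▸ hn' ▸ rfl)
    · obtain ⟨j, hj⟩ := hn'; omega
    · obtain ⟨j, hj⟩ := hn; omega
    · obtain ⟨j, rfl⟩ := hn
      obtain ⟨j', h⟩ := hn'
      have hmod : k % m = k' % m := by
        have := congrArg (· % m) h
        simpa [Nat.add_mul_mod_self_right] using this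
      rcases le_total k k' with hle | hle
      · have hd : m ∣ k' - k := (Nat.modEq_iff_dvd' hle).mp hmod
        have h0 : k' - k = 0 := Nat.eq_zero_of_dvd_of_lt hd (by omega)
        exact hne (by omega)
      · have hd : m ∣ k - k' := (Nat.modEq_iff_dvd' hle).mp hmod.symm
        have h0 : k - k' = 0 := Nat.eq_zero_of_dvd_of_lt hd (by omega)
        exact hne (by omega)
  have hunion : A = ⋃ k ∈ F, E k := by
    ext n
    simp only [Set.mem_iUnion, Set.mem_setOf_eq]
    constructor
    · intro hn
      by_cases h : n < N
      · exact ⟨n, (hFmem n).mpr ⟨by omega, hn⟩, by simp [hE, h]⟩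
      · push_neg at h
        have hdm : (n - N) / m * m + (n - N) % m = n - N := by
          rw [mul_comm]; exact Nat.div_add_mod _ _
        have hrem : (n - N) % m < m := Nat.mod_lt _ (by omega)
        set r0 := (n - N) % m with hr0
        set j0 := (n - N) / m with hj0
        have hn' : n = (N + r0) + j0 * m := by omega
        refine ⟨N + r0, (hFmem _).mpr ⟨by omega, ?_⟩, ?_⟩
        · exact (key (N + r0) (by omega) j0).mp (hn' ▸ hn)
        · simp only [hE, if_neg (by omega : ¬ N + r0 < N), Set.mem_setOf_eq]
          exact ⟨j0, hn'⟩
    · rintro ⟨k, hkF, hnE⟩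
      rw [hFmem] at hkF
      by_cases h : k < N
      · simp only [hE, if_pos h, Set.mem_singleton_iff] at hnE
        exact hnE ▸ hkF.2
      · simp only [hE, if_neg h, Set.mem_setOf_eq] at hnE
        obtain ⟨j, rfl⟩ := hnE
        exact (key k (by omega) j).mpr hkF.2
  set e : Fin F.card → {x // x ∈ F} := fun i => F.equivFin.symm i with he
  refine ⟨F.card, fun i => a * w ^ (e i : ℕ),
    fun i => if (e i : ℕ) < N then 1 else w ^ m, fun _ => b, ?_, ?_, ?_⟩
  · intro i j hij
    rw [hsand, hsand]
    have hne : (e i : ℕ) ≠ (e j : ℕ) := by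
      intro h
      exact hij (F.equivFin.symm.injective (Subtype.ext h))
    exact Set.disjoint_image_of_injective hfinj (hEdisj _ _ (e i).2 (e j).2 hne)
  · have h1 : {z : FreeMonoid α | ∃ k ∈ A, z = a * w ^ k * b} = f '' A := by
      ext z
      simp only [Set.mem_setOf_eq, Set.mem_image, hfdef]
      exact ⟨fun ⟨k, hk, hz⟩ => ⟨k, hk, hz.symm⟩, fun ⟨k, hk, hz⟩ => ⟨k, hk, hz.symm⟩⟩
    rw [h1]
    have h2 : (⋃ i, sandwich (a * w ^ (e i : ℕ))
        (if (e i : ℕ) < N then 1 else w ^ m) b) = ⋃ i, f '' E (e i : ℕ) := by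
      exact Set.iUnion_congr fun i => hsand _
    rw [h2, ← Set.image_iUnion]
    rw [hunion]
    apply congrArg
    refine Set.Subset.antisymm
      (Set.iUnion₂_subset fun k hk => Set.subset_iUnion_of_subset (F.equivFin ⟨k, hk⟩) ?_)
      (Set.iUnion_subset fun i => Set.subset_iUnion₂ (s := fun k _ => E k) (e i : ℕ) (e i).2)
    simp [he]
  · intro i
    by_cases h : (e i : ℕ) < N
    · right
      refine ⟨a * w ^ (e i : ℕ) * b, ?_⟩
      rw [hsand, hE]
      simp [if_pos h, hfdef]
    · left
      exact ⟨(e i : ℕ), rfl, if_neg h, rfl⟩
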